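/- arXiv:2601.03145 — 4 statements merged into one kernel-verified Lean document; each statement's English description precedes it below -/
import Mathlib

section
/- Let d ≥ 1 and let P ⊆ ℝ^d be a full-dimensional lattice polytope. Then μ^F(P) ≤ cd(P), where cd(P) is the codegree of P. -/
open Set

noncomputable section

/-- The pairing `⟨a, x⟩ = ∑ i, a i * x i` of an integer linear functional with a point. -/
def pair {d : ℕ} (a : Fin d → ℤ) (x : Fin d → ℝ) : ℝ := ∑ i, (a i : ℝ) * x i

/-- The support function `h_P(a) = min_{x ∈ P} ⟨a, x⟩`. -/
def suppFn {d : ℕ} (P : Set (Fin d → ℝ)) (a : Fin d → ℤ) : ℝ := sInf (pair a '' P)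

/-- The Fine adjoint polytope `P^{F(s)}`. -/
def fineAdjoint {d : ℕ} (P : Set (Fin d → ℝ)) (s : ℝ) : Set (Fin d → ℝ) :=
  {x | ∀ a : Fin d → ℤ, a ≠ 0 → suppFn P a + s ≤ pair a x}

/-- The Fine number `n^F(P) = sup {s > 0 : P^{F(s)} ≠ ∅}`. -/
def fineNumber {d : ℕ} (P : Set (Fin d → ℝ)) : ℝ :=
  sSup {s : ℝ | 0 < s ∧ (fineAdjoint P s).Nonempty}

/-- The Fine ℚ-codegree `μ^F(P) = (n^F(P))⁻¹`. -/
def fineCodeg {d : ℕ} (P : Set (Fin d → ℝ)) : ℝ := (fineNumber P)⁻¹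

/-- The Fine core `core^F(P) = P^{F(n^F(P))}`. -/
def fineCore {d : ℕ} (P : Set (Fin d → ℝ)) : Set (Fin d → ℝ) := fineAdjoint P (fineNumber P)

/-- A rational polytope: the convex hull of finitely many rational points. -/
def IsRationalPolytope {d : ℕ} (P : Set (Fin d → ℝ)) : Prop :=
  ∃ V : Finset (Fin d → ℝ), V.Nonempty ∧ (∀ v ∈ V, ∀ i, ∃ q : ℚ, v i = (q : ℝ)) ∧
    P = convexHull ℝ (V : Set (Fin d → ℝ))

/-- A lattice polytope: the convex hull of finitely many integer points. -/
def IsLatticePolytope {d : ℕ} (P : Set (Fin d → ℝ)) : Prop :=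
  ∃ V : Finset (Fin d → ℝ), V.Nonempty ∧ (∀ v ∈ V, ∀ i, ∃ n : ℤ, v i = (n : ℝ)) ∧
    P = convexHull ℝ (V : Set (Fin d → ℝ))

/-- Full-dimensional: the affine hull is all of `ℝ^d`. -/
def IsFullDim {d : ℕ} (P : Set (Fin d → ℝ)) : Prop := affineSpan ℝ P = ⊤

/-- A nonzero integer functional `a` is a Fine core normal of `P` if
`⟨a, y⟩ = h_P(a) + n^F(P)` for every `y` in the Fine core of `P`. -/
def IsFineCoreNormal {d : ℕ} (P : Set (Fin d → ℝ)) (a : Fin d → ℤ) : Prop :=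
  a ≠ 0 ∧ ∀ y ∈ fineCore P, pair a y = suppFn P a + fineNumber P

/-- The set of integer points of `ℝ^k`. -/
def intPts (k : ℕ) : Set (Fin k → ℝ) := {x | ∀ i, ∃ n : ℤ, x i = (n : ℝ)}

/-- The Fine spectrum in dimension `k`. -/
def fineSpec (k : ℕ) : Set ℝ :=
  {r | ∃ P : Set (Fin k → ℝ), IsLatticePolytope P ∧ IsFullDim P ∧ r = fineCodeg P}

/-- Unimodular equivalence of subsets of `ℝ^k`. -/
def UnimodEquiv {k : ℕ} (P Q : Set (Fin k → ℝ)) : Prop :=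
  ∃ U : Matrix (Fin k) (Fin k) ℤ, IsUnit U.det ∧ ∃ v : Fin k → ℤ,
    P = (fun x => fun i => (∑ j, (U i j : ℝ) * x j) + (v i : ℝ)) '' Q

/-- The standard simplex `Δ_k = conv{0, e_1, ..., e_k}`. -/
def stdSimp (k : ℕ) : Set (Fin k → ℝ) :=
  convexHull ℝ (insert (0 : Fin k → ℝ) (Set.range fun i => Pi.single i (1 : ℝ)))

/-- The lattice pyramid `Pyr(Q) = conv((Q × {1}) ∪ {0})`. -/
def pyrSet {k : ℕ} (Q : Set (Fin k → ℝ)) : Set (Fin (k + 1) → ℝ) :=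
  convexHull ℝ (((fun x => Fin.snoc x (1 : ℝ)) '' Q) ∪ {0})

/-- Twice the standard triangle, `2Δ₂ = conv{(0,0),(2,0),(0,2)}`. -/
def twoDelta2 : Set (Fin 2 → ℝ) :=
  convexHull ℝ ({![0, 0], ![2, 0], ![0, 2]} : Set (Fin 2 → ℝ))

/-- The `m`-fold iterated lattice pyramid over `2Δ₂`. -/
def iterPyr : (m : ℕ) → Set (Fin (2 + m) → ℝ)
  | 0 => twoDelta2
  | m + 1 => pyrSet (iterPyr m)

end

noncomputable section

lemma pair_smul {d : ℕ} (a : Fin d → ℤ) (c : ℝ) (x : Fin d → ℝ) :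
    pair a (c • x) = c * pair a x := by
  simp only [pair, Finset.mul_sum, Pi.smul_apply, smul_eq_mul]
  exact Finset.sum_congr rfl fun i _ => by ring

lemma pair_sub {d : ℕ} (a : Fin d → ℤ) (x y : Fin d → ℝ) :
    pair a (x - y) = pair a x - pair a y := by
  simp only [pair, ← Finset.sum_sub_distrib, Pi.sub_apply]
  exact Finset.sum_congr rfl fun i _ => by ring

lemma pair_neg {d : ℕ} (a : Fin d → ℤ) (x : Fin d → ℝ) :
    pair (-a) x = - pair a x := by
  simp only [pair, ← Finset.sum_neg_distrib, Pi.neg_apply]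
  exact Finset.sum_congr rfl fun i _ => by push_cast; ring

lemma pair_int {d : ℕ} (a : Fin d → ℤ) (x : Fin d → ℝ) (hx : ∀ i, ∃ n : ℤ, x i = (n : ℝ)) :
    ∃ z : ℤ, pair a x = (z : ℝ) := by
  choose n hn using hx
  exact ⟨∑ i, a i * n i, by simp [pair, hn]⟩

/-- suppFn is an integer and is a lower bound on P. -/
lemma suppFn_spec {d : ℕ} {P : Set (Fin d → ℝ)} (hP : IsLatticePolytope P) (a : Fin d → ℤ) :
    (∃ z : ℤ, suppFn P a = (z : ℝ)) ∧ ∀ y ∈ P, suppFn P a ≤ pair a y := by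
  obtain ⟨V, hVne, hVint, rfl⟩ := hP
  obtain ⟨v0, hv0, hmin⟩ := V.exists_min_image (pair a) hVne
  have hlin : IsLinearMap ℝ (pair a) :=
    ⟨fun x y => by simp [pair, ← Finset.sum_add_distrib, mul_add],
     fun c x => by rw [pair_smul]; rfl⟩
  have hlb : ∀ y ∈ convexHull ℝ (V : Set (Fin d → ℝ)), pair a v0 ≤ pair a y := by
    intro y hy
    have : convexHull ℝ (V : Set (Fin d → ℝ)) ⊆ {x | pair a v0 ≤ pair a x} := by
      apply convexHull_min
      · intro v hv; exact hmin v hv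
      · exact convex_halfSpace_ge hlin _
    exact this hy
  have hbdd : BddBelow (pair a '' convexHull ℝ (V : Set (Fin d → ℝ))) := by
    refine ⟨pair a v0, ?_⟩
    rintro r ⟨y, hy, rfl⟩; exact hlb y hy
  have hv0P : v0 ∈ convexHull ℝ (V : Set (Fin d → ℝ)) :=
    subset_convexHull ℝ _ hv0
  have heq : suppFn (convexHull ℝ (V : Set (Fin d → ℝ))) a = pair a v0 := by
    apply le_antisymm
    · exact csInf_le hbdd ⟨v0, hv0P, rfl⟩
    · refine le_csInf ⟨pair a v0, v0, hv0P, rfl⟩ ?_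
      rintro r ⟨y, hy, rfl⟩; exact hlb y hy
  constructor
  · obtain ⟨z, hz⟩ := pair_int a v0 (hVint v0 hv0)
    exact ⟨z, heq.trans hz⟩
  · intro y hy; rw [heq]; exact hlb y hy

end

noncomputable section

lemma adjoint_mem {d : ℕ} {P : Set (Fin d → ℝ)} (hP : IsLatticePolytope P)
    {k : ℕ} (hk : 1 ≤ k) {x : Fin d → ℝ}
    (hxint : x ∈ interior ((fun y => (k : ℝ) • y) '' P)) (hxZ : x ∈ intPts d) :
    ((k : ℝ)⁻¹ • x) ∈ fineAdjoint P ((k : ℝ)⁻¹) := by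
  have hkpos : (0 : ℝ) < (k : ℝ) := by exact_mod_cast hk
  intro a ha
  obtain ⟨⟨z, hz⟩, hlb⟩ := suppFn_spec hP a
  obtain ⟨w, hw⟩ := pair_int a x hxZ
  -- lower bound k*z on the dilate
  have hklb : ∀ y ∈ (fun y => (k : ℝ) • y) '' P, (k : ℝ) * (z : ℝ) ≤ pair a y := by
    rintro _ ⟨p, hp, rfl⟩
    rw [pair_smul]
    have h1 := hlb p hp
    rw [hz] at h1
    nlinarith
  -- perturbation direction
  set aR : Fin d → ℝ := fun i => (a i : ℝ) with haR
  have hpaR : pair a aR = ∑ i, ((a i : ℝ))^2 := by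
    apply Finset.sum_congr rfl; intro i _; ring
  have hS2 : 0 < ∑ i, ((a i : ℝ))^2 := by
    obtain ⟨i0, hi0⟩ := Function.ne_iff.mp ha
    apply Finset.sum_pos' (fun i _ => sq_nonneg _)
    refine ⟨i0, Finset.mem_univ _, ?_⟩
    have : (a i0 : ℝ) ≠ 0 := by exact_mod_cast hi0
    positivity
  obtain ⟨δ, hδ, hball⟩ := Metric.mem_nhds_iff.mp (mem_interior_iff_mem_nhds.mp hxint)
  set δ' : ℝ := δ / (2 * (‖aR‖ + 1)) with hδ'
  have hnorm : (0:ℝ) < ‖aR‖ + 1 := by positivity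
  have hδ'pos : 0 < δ' := by positivity
  have hmem : x - δ' • aR ∈ Metric.ball x δ := by
    rw [Metric.mem_ball, dist_eq_norm]
    have : x - δ' • aR - x = -(δ' • aR) := by abel
    rw [this, norm_neg, norm_smul, Real.norm_eq_abs, abs_of_pos hδ'pos]
    calc δ' * ‖aR‖ < δ' * (2 * (‖aR‖ + 1)) := by nlinarith
    _ = δ := by
        rw [hδ', div_mul_cancel₀ _ (ne_of_gt (by positivity : (0:ℝ) < 2 * (‖aR‖ + 1)))]
  have hstrict : (k : ℝ) * (z : ℝ) < pair a x := by
    have h2 := hklb _ (hball hmem)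
    rw [pair_sub, pair_smul, hpaR] at h2
    nlinarith
  -- integrality
  have hint : (k : ℤ) * z + 1 ≤ w := by
    have h4 : ((k : ℤ) * z : ℝ) < ((w : ℤ) : ℝ) := by push_cast; rw [← hw]; exact hstrict
    have h5 : (k : ℤ) * z < w := by exact_mod_cast h4
    omega
  have hintR : (k : ℝ) * (z : ℝ) + 1 ≤ (w : ℝ) := by exact_mod_cast hint
  rw [hz, pair_smul, hw]
  have hki : (k : ℝ)⁻¹ * (k : ℝ) = 1 := inv_mul_cancel₀ (ne_of_gt hkpos)
  have h3 : (k : ℝ)⁻¹ * ((k : ℝ) * (z : ℝ) + 1) ≤ (k : ℝ)⁻¹ * (w : ℝ) :=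
    mul_le_mul_of_nonneg_left hintR (le_of_lt (inv_pos.mpr hkpos))
  calc (z : ℝ) + (k : ℝ)⁻¹ = (k : ℝ)⁻¹ * ((k : ℝ) * (z : ℝ) + 1) := by
        field_simp
    _ ≤ (k : ℝ)⁻¹ * (w : ℝ) := h3

lemma cd_set_nonempty {d : ℕ} {P : Set (Fin d → ℝ)} (hP : IsLatticePolytope P)
    (hfull : IsFullDim P) :
    {k : ℕ | 1 ≤ k ∧
      (interior ((fun y => (k : ℝ) • y) '' P) ∩ intPts d).Nonempty}.Nonempty := by
  obtain ⟨V, hVne, hVint, hPV⟩ := hP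
  have hconv : Convex ℝ P := hPV ▸ convex_convexHull ℝ _
  have hint : (interior P).Nonempty :=
    hconv.interior_nonempty_iff_affineSpan_eq_top.mpr hfull
  obtain ⟨x0, hx0⟩ := hint
  obtain ⟨ε, hε, hball⟩ := Metric.mem_nhds_iff.mp (mem_interior_iff_mem_nhds.mp hx0)
  set k : ℕ := max 1 ⌈ε⁻¹⌉₊ with hkdef
  have hk1 : 1 ≤ k := le_max_left _ _
  have hkpos : (0 : ℝ) < (k : ℝ) := by exact_mod_cast hk1
  have hkε : 1 ≤ (k : ℝ) * ε := by
    have h1 : (ε⁻¹ : ℝ) ≤ (⌈ε⁻¹⌉₊ : ℝ) := Nat.le_ceil _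
    have h2 : ((⌈ε⁻¹⌉₊ : ℕ) : ℝ) ≤ (k : ℝ) := by exact_mod_cast le_max_right 1 ⌈ε⁻¹⌉₊
    calc (1 : ℝ) = ε⁻¹ * ε := (inv_mul_cancel₀ (ne_of_gt hε)).symm
      _ ≤ (k : ℝ) * ε := by nlinarith
  refine ⟨k, hk1, ?_⟩
  set z : Fin d → ℝ := fun i => ((round ((k : ℝ) * x0 i) : ℤ) : ℝ) with hzdef
  have hzball : z ∈ Metric.ball ((k : ℝ) • x0) ((k : ℝ) * ε) := by
    rw [Metric.mem_ball]
    rw [dist_pi_lt_iff (by positivity)]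
    intro i
    have h1 : dist (z i) (((k : ℝ) • x0) i) = |((round ((k : ℝ) * x0 i) : ℤ) : ℝ) - (k : ℝ) * x0 i| := by
      simp [hzdef, Real.dist_eq]
    rw [h1]
    calc |((round ((k : ℝ) * x0 i) : ℤ) : ℝ) - (k : ℝ) * x0 i| ≤ 1/2 := by rw [abs_sub_comm]; exact abs_sub_round _
      _ < 1 := by norm_num
      _ ≤ (k : ℝ) * ε := hkε
  have hsub : Metric.ball ((k : ℝ) • x0) ((k : ℝ) * ε) ⊆ (fun y => (k : ℝ) • y) '' P := by
    intro y hy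
    refine ⟨(k : ℝ)⁻¹ • y, ?_, ?_⟩
    · apply hball
      rw [Metric.mem_ball]
      have : x0 = (k : ℝ)⁻¹ • ((k : ℝ) • x0) := by
        rw [smul_smul, inv_mul_cancel₀ (ne_of_gt hkpos), one_smul]
      rw [this, dist_smul₀, Real.norm_eq_abs, abs_of_pos (inv_pos.mpr hkpos)]
      rw [Metric.mem_ball] at hy
      calc (k : ℝ)⁻¹ * dist y ((k : ℝ) • x0) < (k : ℝ)⁻¹ * ((k : ℝ) * ε) := by
            exact mul_lt_mul_of_pos_left hy (inv_pos.mpr hkpos)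
        _ = ε := by field_simp
    · show (k : ℝ) • ((k : ℝ)⁻¹ • y) = y
      rw [smul_smul, mul_inv_cancel₀ (ne_of_gt hkpos), one_smul]
  have hzint : z ∈ interior ((fun y => (k : ℝ) • y) '' P) :=
    interior_maximal hsub Metric.isOpen_ball hzball
  exact ⟨z, hzint, fun i => ⟨round ((k : ℝ) * x0 i), rfl⟩⟩

lemma S_bddAbove {d : ℕ} (hd : 1 ≤ d) (P : Set (Fin d → ℝ)) :
    BddAbove {s : ℝ | 0 < s ∧ (fineAdjoint P s).Nonempty} := by
  set a : Fin d → ℤ := Pi.single (⟨0, hd⟩ : Fin d) 1 with hadef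
  have ha : a ≠ 0 := by
    intro h
    have := congrFun h ⟨0, hd⟩
    simp [hadef] at this
  refine ⟨(-(suppFn P a) - suppFn P (-a)) / 2, ?_⟩
  rintro s ⟨hs, x, hx⟩
  have h1 := hx a ha
  have h2 := hx (-a) (neg_ne_zero.mpr ha)
  rw [pair_neg] at h2
  linarith

end


/-- the Fine ℚ-codegree is at most the codegree. -/
theorem stmt_2 {d : ℕ} (hd : 1 ≤ d) (P : Set (Fin d → ℝ))
    (hP : IsLatticePolytope P) (hfull : IsFullDim P) :
    fineCodeg P ≤
      ((sInf {k : ℕ | 1 ≤ k ∧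
        (interior ((fun y => (k : ℝ) • y) '' P) ∩ intPts d).Nonempty} : ℕ) : ℝ) := by
  
  have hne := cd_set_nonempty hP hfull
  set K : ℕ := sInf {k : ℕ | 1 ≤ k ∧
    (interior ((fun y => (k : ℝ) • y) '' P) ∩ intPts d).Nonempty} with hKdef
  obtain ⟨hK1, x, hxint, hxZ⟩ := Nat.sInf_mem hne
  have hKpos : (0 : ℝ) < (K : ℝ) := by have hK1' : 1 ≤ K := hK1; exact_mod_cast hK1'
  have hmemS : (K : ℝ)⁻¹ ∈ {s : ℝ | 0 < s ∧ (fineAdjoint P s).Nonempty} :=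
    ⟨inv_pos.mpr hKpos, _, adjoint_mem hP hK1 hxint hxZ⟩
  have hle : (K : ℝ)⁻¹ ≤ fineNumber P := le_csSup (S_bddAbove hd P) hmemS
  have : fineCodeg P ≤ ((K : ℝ)⁻¹)⁻¹ := by
    unfold fineCodeg
    exact inv_anti₀ (inv_pos.mpr hKpos) hle
  rwa [inv_inv] at this
end

section
/- Let d ≥ 2. Every element of S^F(d) \ S^F(d-1) is equal to μ^F(P) for some d-dimensional lattice polytope P ⊆ ℝ^d whose Fine core core^F(P) consists of a single point. -/
open Set

namespace S5
noncomputable section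
open Set Finset

variable {D : ℕ}

def anorm (a : Fin D → ℤ) : ℝ := ∑ i, |(a i : ℝ)|

lemma anorm_nonneg (a : Fin D → ℤ) : 0 ≤ anorm a :=
  Finset.sum_nonneg fun i _ => abs_nonneg _

lemma one_le_anorm {a : Fin D → ℤ} (ha : a ≠ 0) : 1 ≤ anorm a := by
  obtain ⟨i, hi⟩ := Function.ne_iff.mp ha
  have hi' : a i ≠ 0 := by simpa using hi
  have h1 : (1:ℝ) ≤ |(a i : ℝ)| := by
    have : (1:ℤ) ≤ |a i| := Int.one_le_abs hi'
    calc (1:ℝ) ≤ (|a i| : ℤ) := by exact_mod_cast this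
    _ = |(a i : ℝ)| := by push_cast; ring
  calc (1:ℝ) ≤ |(a i : ℝ)| := h1
  _ ≤ anorm a := Finset.single_le_sum (f := fun i => |(a i : ℝ)|)
      (fun i _ => abs_nonneg _) (Finset.mem_univ i)

lemma abs_coord_le_anorm (a : Fin D → ℤ) (i : Fin D) : |(a i : ℝ)| ≤ anorm a :=
  Finset.single_le_sum (f := fun i => |(a i : ℝ)|) (fun i _ => abs_nonneg _) (Finset.mem_univ i)

lemma pair_add (a : Fin D → ℤ) (x y : Fin D → ℝ) : pair a (x + y) = pair a x + pair a y := by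
  simp [pair, mul_add, Finset.sum_add_distrib]

lemma pair_smul (a : Fin D → ℤ) (c : ℝ) (x : Fin D → ℝ) : pair a (c • x) = c * pair a x := by
  simp [pair, Finset.mul_sum]; congr 1; ext i; ring

lemma pair_comb (a : Fin D → ℤ) (c c' : ℝ) (x y : Fin D → ℝ) :
    pair a (c • x + c' • y) = c * pair a x + c' * pair a y := by
  rw [pair_add, pair_smul, pair_smul]

lemma pair_neg (a : Fin D → ℤ) (x : Fin D → ℝ) : pair (-a) x = - pair a x := by
  rw [pair, pair, ← Finset.sum_neg_distrib]
  apply Finset.sum_congr rfl; intro i _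
  push_cast [Pi.neg_apply]; ring

lemma pair_sub_right (a : Fin D → ℤ) (x y : Fin D → ℝ) :
    pair a (y - x) = pair a y - pair a x := by
  have : y - x = (1:ℝ) • y + (-1:ℝ) • x := by ext i; simp; ring
  rw [this, pair_comb]; ring

lemma abs_pair_le {a : Fin D → ℤ} {x : Fin D → ℝ} {C : ℝ} (h : ∀ i, |x i| ≤ C) :
    |pair a x| ≤ anorm a * C := by
  calc |pair a x| ≤ ∑ i, |(a i : ℝ) * x i| := Finset.abs_sum_le_sum_abs _ _
  _ ≤ ∑ i, |(a i : ℝ)| * C := by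
      apply Finset.sum_le_sum; intro i _
      rw [abs_mul]
      exact mul_le_mul_of_nonneg_left (h i) (abs_nonneg _)
  _ = anorm a * C := by rw [anorm, Finset.sum_mul]

def pairL (a : Fin D → ℤ) : (Fin D → ℝ) →ₗ[ℝ] ℝ where
  toFun := pair a
  map_add' := pair_add a
  map_smul' c x := by simpa using pair_smul a c x

lemma continuous_pair (a : Fin D → ℤ) : Continuous (pair a) :=
  (pairL a).continuous_of_finiteDimensional

section SuppFn
variable {D : ℕ} {T : Set (Fin D → ℝ)}

lemma suppFn_le_pair (hc : IsCompact T) {x : Fin D → ℝ} (hx : x ∈ T) (a : Fin D → ℤ) :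
    suppFn T a ≤ pair a x := by
  apply csInf_le _ (Set.mem_image_of_mem _ hx)
  exact (hc.image (continuous_pair a)).bddBelow

lemma le_suppFn (hne : T.Nonempty) {a : Fin D → ℤ} {c : ℝ}
    (h : ∀ x ∈ T, c ≤ pair a x) : c ≤ suppFn T a := by
  apply le_csInf (hne.image _)
  rintro b ⟨x, hx, rfl⟩; exact h x hx

/-- A deep interior point of a full-dimensional convex set: a sup-norm ball fits inside. -/
lemma exists_deep (hconv : Convex ℝ T) (hfd : affineSpan ℝ T = ⊤) :
    ∃ (z : Fin D → ℝ) (ρ : ℝ), 0 < ρ ∧ ∀ u : Fin D → ℝ, (∀ i, |u i| ≤ ρ) → z + u ∈ T := by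
  have hint : (interior T).Nonempty := by
    rw [hconv.interior_nonempty_iff_affineSpan_eq_top]; exact hfd
  obtain ⟨z, hz⟩ := hint
  rw [mem_interior_iff_mem_nhds, Metric.mem_nhds_iff] at hz
  obtain ⟨ε, hε, hball⟩ := hz
  refine ⟨z, ε/2, by linarith, fun u hu => ?_⟩
  apply hball
  rw [Metric.mem_ball, dist_self_add_left]
  have h2 : ‖u‖ ≤ ε/2 := by
    apply pi_norm_le_iff_of_nonneg (by linarith) |>.2
    intro i; rw [Real.norm_eq_abs]; exact hu i
  linarith

lemma deep_slack (hc : IsCompact T) {z : Fin D → ℝ} {ρ : ℝ}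
    (hz : ∀ u : Fin D → ℝ, (∀ i, |u i| ≤ ρ) → z + u ∈ T) (hρ : 0 ≤ ρ) (a : Fin D → ℤ) :
    suppFn T a + ρ * anorm a ≤ pair a z := by
  set u : Fin D → ℝ := fun i => if 0 ≤ a i then -ρ else ρ with hu
  have hmem : z + u ∈ T := by
    apply hz; intro i
    by_cases h : 0 ≤ a i <;> simp [hu, h, abs_of_nonneg hρ, abs_of_nonpos, hρ, neg_neg]
  have hval : pair a (z + u) = pair a z - ρ * anorm a := by
    rw [pair_add]
    have : pair a u = - (ρ * anorm a) := by
      rw [pair, anorm, Finset.mul_sum, ← Finset.sum_neg_distrib]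
      apply Finset.sum_congr rfl; intro i _
      by_cases h : 0 ≤ a i
      · rw [hu]; simp only [h, if_true]
        rw [abs_of_nonneg (by exact_mod_cast h : (0:ℝ) ≤ (a i : ℝ))]; ring
      · rw [hu]; simp only [h, if_false]
        push_neg at h
        rw [abs_of_nonpos (by exact_mod_cast h.le : ((a i : ℝ)) ≤ 0)]; ring
    rw [this]; ring
  have := suppFn_le_pair hc hmem a
  rw [hval] at this; linarith

/-- The set of good `s` is bounded above. -/
lemma adjSet_bddAbove (hD : 0 < D) (hc : IsCompact T) (hne : T.Nonempty) :
    BddAbove {s : ℝ | 0 < s ∧ (fineAdjoint T s).Nonempty} := by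
  classical
  set i0 : Fin D := ⟨0, hD⟩
  set e0 : Fin D → ℤ := Pi.single i0 1 with he0
  have he0ne : e0 ≠ 0 := by
    intro h
    have := congrFun h i0
    simp [he0] at this
  have hne0 : -e0 ≠ 0 := by simpa using he0ne
  refine ⟨(- suppFn T e0 - suppFn T (-e0)) / 2, ?_⟩
  rintro s ⟨hs, x, hx⟩
  have h1 := hx e0 he0ne
  have h2 := hx (-e0) hne0
  rw [pair_neg] at h2
  linarith

lemma adjoint_isClosed (T : Set (Fin D → ℝ)) (s : ℝ) : IsClosed (fineAdjoint T s) := by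
  have : fineAdjoint T s = ⋂ (a : {a : Fin D → ℤ // a ≠ 0}),
      {x | suppFn T a.1 + s ≤ pair a.1 x} := by
    ext x; simp [fineAdjoint, Set.mem_iInter, Subtype.forall]
  rw [this]
  exact isClosed_iInter fun a => isClosed_le continuous_const (continuous_pair a.1)

lemma adjoint_subset_box (hD : 0 < D) (T : Set (Fin D → ℝ)) {s : ℝ} (hs : 0 < s) :
    fineAdjoint T s ⊆ Set.Icc (fun i => suppFn T (Pi.single i 1))
      (fun i => - suppFn T (-Pi.single i 1)) := by
  intro x hx
  constructor <;> intro i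
  · have h1 := hx (Pi.single i 1) (by intro h; have := congrFun h i; simp at this)
    have hp : pair (Pi.single i 1) x = x i := by
      rw [pair]
      rw [Finset.sum_eq_single i] <;> simp +contextual [Pi.single_apply]
    rw [hp] at h1; simp at h1 ⊢; linarith
  · have h1 := hx (-Pi.single i 1) (by intro h; have := congrFun h i; simp at this)
    rw [pair_neg] at h1
    have hp : pair (Pi.single i 1) x = x i := by
      rw [pair]
      rw [Finset.sum_eq_single i] <;> simp +contextual [Pi.single_apply]
    rw [hp] at h1; simp at h1 ⊢; linarith

lemma adjoint_isCompact (hD : 0 < D) (T : Set (Fin D → ℝ)) {s : ℝ} (hs : 0 < s) :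
    IsCompact (fineAdjoint T s) :=
  IsCompact.of_isClosed_subset isCompact_Icc (adjoint_isClosed T s) (adjoint_subset_box hD T hs)

lemma adjoint_mono (T : Set (Fin D → ℝ)) {s t : ℝ} (hst : s ≤ t) :
    fineAdjoint T t ⊆ fineAdjoint T s := by
  intro x hx a ha
  have := hx a ha; linarith

end SuppFn

section FineNum
variable {D : ℕ} {T : Set (Fin D → ℝ)}

def adjSet (T : Set (Fin D → ℝ)) : Set ℝ := {s : ℝ | 0 < s ∧ (fineAdjoint T s).Nonempty}

lemma fineNumber_eq : fineNumber T = sSup (adjSet T) := rfl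

lemma mem_adjSet_of_deep (hc : IsCompact T) {z : Fin D → ℝ} {ρ : ℝ} (hρ : 0 < ρ)
    (hz : ∀ u : Fin D → ℝ, (∀ i, |u i| ≤ ρ) → z + u ∈ T) : ρ ∈ adjSet T := by
  refine ⟨hρ, z, fun a ha => ?_⟩
  have h1 := deep_slack hc hz hρ.le a
  have h2 : ρ * 1 ≤ ρ * anorm a := by
    apply mul_le_mul_of_nonneg_left (one_le_anorm ha) hρ.le
  linarith

lemma fineNumber_pos (hD : 0 < D) (hc : IsCompact T) (hne : T.Nonempty)
    (hconv : Convex ℝ T) (hfd : affineSpan ℝ T = ⊤) : 0 < fineNumber T := by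
  obtain ⟨z, ρ, hρ, hz⟩ := exists_deep hconv hfd
  have hmem := mem_adjSet_of_deep hc hρ hz
  exact lt_of_lt_of_le hρ (le_csSup (adjSet_bddAbove hD hc hne) hmem)

/-- The fine core is nonempty for a full-dimensional polytope. -/
lemma core_nonempty (hD : 0 < D) (hc : IsCompact T) (hne : T.Nonempty)
    (hconv : Convex ℝ T) (hfd : affineSpan ℝ T = ⊤) : (fineCore T).Nonempty := by
  have hn : 0 < fineNumber T := fineNumber_pos hD hc hne hconv hfd
  have hbdd := adjSet_bddAbove (T := T) hD hc hne
  obtain ⟨z, ρ, hρ, hz⟩ := exists_deep hconv hfd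
  have hadsne : (adjSet T).Nonempty := ⟨ρ, mem_adjSet_of_deep hc hρ hz⟩
  set n := fineNumber T with hndef
  set ι := {s : ℝ // 0 < s ∧ s < n} with hι
  haveI : Nonempty ι := ⟨⟨n/2, by constructor <;> linarith⟩⟩
  have hnonempty : ∀ s : ι, (fineAdjoint T s.1).Nonempty := by
    rintro ⟨s, hs0, hsn⟩
    obtain ⟨t, htmem, hts⟩ := exists_lt_of_lt_csSup hadsne hsn
    exact htmem.2.mono (adjoint_mono T hts.le)
  have hdir : Directed (· ⊇ ·) (fun s : ι => fineAdjoint T s.1) := by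
    rintro ⟨s, hs⟩ ⟨t, ht⟩
    refine ⟨⟨max s t, lt_max_of_lt_left hs.1, max_lt hs.2 ht.2⟩, ?_, ?_⟩
    · exact adjoint_mono T (le_max_left _ _)
    · exact adjoint_mono T (le_max_right _ _)
  have hint := IsCompact.nonempty_iInter_of_directed_nonempty_isCompact_isClosed
    (fun s : ι => fineAdjoint T s.1) hdir hnonempty
    (fun s => adjoint_isCompact hD T s.2.1) (fun s => adjoint_isClosed T s.1)
  obtain ⟨x, hx⟩ := hint
  refine ⟨x, fun a ha => ?_⟩
  simp only [Set.mem_iInter] at hx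
  by_contra hcon
  push_neg at hcon
  set c := pair a x - suppFn T a with hcdef
  have hcn : c < n := by linarith
  set s : ℝ := max (n/2) ((c+n)/2) with hs
  have hs0 : 0 < s := lt_max_of_lt_left (by linarith)
  have hsn : s < n := max_lt (by linarith) (by linarith)
  have := hx ⟨s, hs0, hsn⟩ a ha
  have : s ≤ c := by linarith
  have : (c+n)/2 ≤ c := le_trans (le_max_right _ _) this
  linarith

end FineNum

section Sep
variable {D : ℕ} {T : Set (Fin D → ℝ)}

/-- If a point satisfies all strict integer half-space inequalities of a compact convex set,
it belongs to the set. -/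
lemma mem_of_forall_suppFn_lt (hconv : Convex ℝ T) (hc : IsCompact T) (hne : T.Nonempty)
    {y : Fin D → ℝ} (hy : ∀ a : Fin D → ℤ, a ≠ 0 → suppFn T a < pair a y) : y ∈ T := by
  by_contra hyT
  obtain ⟨f, u, hfy, hfT⟩ := geometric_hahn_banach_point_closed hconv hc.isClosed hyT
  -- coordinate functional values
  set φ : Fin D → ℝ := fun j => f (fun j' => if j = j' then 1 else 0) with hφ
  have hf_eq : ∀ x : Fin D → ℝ, f x = ∑ j, x j * φ j := by
    intro x
    conv_lhs => rw [pi_eq_sum_univ x]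
    rw [map_sum]
    apply Finset.sum_congr rfl
    intro j _
    rw [ContinuousLinearMap.map_smul]
    rw [hφ]; simp [smul_eq_mul]
  -- a coordinate bound
  obtain ⟨x0, hx0T, hx0⟩ := hc.exists_isMaxOn hne continuous_norm.continuousOn
  set C : ℝ := max ‖x0‖ ‖y‖ + 1 with hC
  have hC1 : 1 ≤ C := by
    have : (0:ℝ) ≤ max ‖x0‖ ‖y‖ := le_max_iff.2 (Or.inl (norm_nonneg _))
    linarith
  have hCpos : 0 < C := by linarith
  have hboundT : ∀ x ∈ T, ∀ j, |x j| ≤ C := by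
    intro x hx j
    calc |x j| = ‖x j‖ := rfl
    _ ≤ ‖x‖ := norm_le_pi_norm x j
    _ ≤ ‖x0‖ := hx0 hx
    _ ≤ C := by have := le_max_left ‖x0‖ ‖y‖; linarith
  have hboundy : ∀ j, |y j| ≤ C := by
    intro j
    calc |y j| = ‖y j‖ := rfl
    _ ≤ ‖y‖ := norm_le_pi_norm y j
    _ ≤ C := by have := le_max_right ‖x0‖ ‖y‖; linarith
  have hδ : 0 < u - f y := by linarith
  -- some coordinate of f is nonzero
  have hφne : ∃ j, φ j ≠ 0 := by
    by_contra h
    push_neg at h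
    obtain ⟨b, hb⟩ := hne
    have h1 : f y = 0 := by rw [hf_eq]; simp [h]
    have h2 : f b = 0 := by rw [hf_eq]; simp [h]
    have := hfT b hb
    rw [h2] at this; rw [h1] at hfy; linarith
  obtain ⟨j0, hj0⟩ := hφne
  -- choose a large integer N
  obtain ⟨N, hN⟩ := exists_nat_gt (max ((D * C + 1) / (u - f y)) (1 / |φ j0|))
  have hN1 : (D * C + 1) / (u - f y) < (N:ℝ) := lt_of_le_of_lt (le_max_left _ _) hN
  have hN2 : 1 / |φ j0| < (N:ℝ) := lt_of_le_of_lt (le_max_right _ _) hN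
  have hNpos : (0:ℝ) < N := lt_of_le_of_lt (by positivity) hN2
  have hNd : N * (u - f y) > D * C + 1 := by
    rw [div_lt_iff₀ hδ] at hN1; linarith
  -- integer approximation
  set A : Fin D → ℤ := fun j => round ((N:ℝ) * φ j) with hA
  have herr : ∀ j, |(A j : ℝ) - N * φ j| ≤ 1/2 := by
    intro j
    rw [hA]
    rw [abs_sub_comm]
    exact abs_sub_round _
  have hpair : ∀ x : Fin D → ℝ, (∀ j, |x j| ≤ C) → |pair A x - N * f x| ≤ D * C / 2 := by
    intro x hx
    rw [hf_eq, pair]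
    have : (∑ j, (A j : ℝ) * x j) - (N:ℝ) * ∑ j, x j * φ j
        = ∑ j, ((A j : ℝ) - N * φ j) * x j := by
      rw [Finset.mul_sum, ← Finset.sum_sub_distrib]
      apply Finset.sum_congr rfl; intro j _; ring
    rw [this]
    calc |∑ j, ((A j : ℝ) - N * φ j) * x j| ≤ ∑ j, |((A j : ℝ) - N * φ j) * x j| :=
        Finset.abs_sum_le_sum_abs _ _
    _ ≤ ∑ _j : Fin D, (1/2) * C := by
        apply Finset.sum_le_sum; intro j _
        rw [abs_mul]
        apply mul_le_mul (herr j) (hx j) (abs_nonneg _) (by norm_num)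
    _ = D * C / 2 := by
        rw [Finset.sum_const, Finset.card_univ, Fintype.card_fin]; ring
  -- A is nonzero
  have hAne : A ≠ 0 := by
    intro h
    have h0 := congrFun h j0
    simp only [Pi.zero_apply] at h0
    have := herr j0
    rw [h0] at this
    simp only [Int.cast_zero, zero_sub, abs_neg, abs_mul] at this
    rw [abs_of_pos hNpos] at this
    rw [div_lt_iff₀ (abs_pos.2 hj0)] at hN2
    nlinarith [abs_pos.2 hj0]
  -- lower bound for suppFn T A
  have hsupp : (N:ℝ) * u - D * C / 2 ≤ suppFn T A := by
    apply le_suppFn hne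
    intro x hx
    have h1 := hpair x (hboundT x hx)
    have h2 := hfT x hx
    have h3 : |pair A x - N * f x| ≤ D * C / 2 := h1
    rw [abs_le] at h3
    nlinarith [h3.1]
  -- upper bound for pair A y
  have hup : pair A y ≤ (N:ℝ) * f y + D * C / 2 := by
    have h1 := hpair y hboundy
    rw [abs_le] at h1
    linarith [h1.2]
  have := hy A hAne
  nlinarith
end Sep

section Lattice

/-- Integer pairing with a fixed real vector, as a `ℤ`-linear map. -/
def pairW {D : ℕ} (w : Fin D → ℝ) : (Fin D → ℤ) →ₗ[ℤ] ℝ where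
  toFun a := pair a w
  map_add' a b := by
    simp only [pair]
    rw [← Finset.sum_add_distrib]
    apply Finset.sum_congr rfl; intro i _
    push_cast [Pi.add_apply]; ring
  map_smul' c a := by
    simp only [pair, RingHom.id_apply, zsmul_eq_mul]
    rw [Finset.mul_sum]
    apply Finset.sum_congr rfl; intro i _
    simp only [Pi.mul_apply, Pi.intCast_apply]
    push_cast; ring

lemma pair_single_one {D : ℕ} (j : Fin D) (w : Fin D → ℝ) :
    pair (Pi.single j 1) w = w j := by
  rw [pair, Finset.sum_eq_single j] <;> simp +contextual [Pi.single_apply]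

/-- The key lattice lemma: given a nonzero real vector `w` in `ℝ^D`, `D = k+1`, there is an
integer `k × D` matrix `M` whose transpose is injective, whose row span (over `ℤ`) contains
every integer vector orthogonal to `w`, and which is surjective as a map `ℝ^D → ℝ^k`. -/
lemma lattice_proj {k D : ℕ} (hDk : D = k + 1) {w : Fin D → ℝ} (hw : w ≠ 0) :
    ∃ M : Matrix (Fin k) (Fin D) ℤ,
      (∀ a' : Fin k → ℤ, (fun j => ∑ i, a' i * M i j) = (0 : Fin D → ℤ) → a' = 0) ∧
      (∀ a : Fin D → ℤ, pair a w = 0 → ∃ a' : Fin k → ℤ, a = fun j => ∑ i, a' i * M i j) ∧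
      Function.Surjective (fun (x : Fin D → ℝ) (i : Fin k) => ∑ j, (M i j : ℝ) * x j) := by
  classical
  set L := pairW w with hL
  set A := LinearMap.ker L with hA
  obtain ⟨m, bM, bN, f, c, hsnf⟩ := A.smithNormalForm (Pi.basisFun ℤ (Fin D))
  -- there is an index not hit by f
  have hrange : ∃ j0 : Fin D, ∀ i, f i ≠ j0 := by
    by_contra hcon
    push_neg at hcon
    have hLbM : ∀ j, L (bM j) = 0 := by
      intro j
      obtain ⟨i, hi⟩ := hcon j
      have hmem : (bN i : Fin D → ℤ) ∈ A := (bN i).2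
      have h0 : L (bN i : Fin D → ℤ) = 0 := hmem
      rw [hsnf i, hi] at h0
      rw [map_smul] at h0
      have hci : c i ≠ 0 := by
        intro hci0
        have : (bN i : Fin D → ℤ) = 0 := by rw [hsnf i, hci0, zero_smul]
        exact bN.ne_zero i (by exact_mod_cast Subtype.coe_injective (by simpa using this))
      have : (c i : ℝ) * L (bM j) = 0 := by rwa [zsmul_eq_mul] at h0
      rcases mul_eq_zero.1 this with h | h
      · exact absurd (by exact_mod_cast h) hci
      · exact h
    have hall : ∀ u : Fin D → ℤ, L u = 0 := by
      intro u
      have hu : u ∈ Submodule.span ℤ (Set.range bM) := by rw [bM.span_eq]; trivial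
      induction hu using Submodule.span_induction with
      | mem x hx => obtain ⟨j, rfl⟩ := hx; exact hLbM j
      | zero => simp
      | add x y _ _ hx hy => rw [map_add, hx, hy, add_zero]
      | smul c x _ hx => rw [map_smul, hx, smul_zero]
    apply hw
    funext j
    have := hall (Pi.single j 1)
    rw [hL] at this
    simpa [pairW, pair_single_one] using this
  obtain ⟨j0, hj0⟩ := hrange
  -- extend the image of f to a k-element set
  set S : Finset (Fin D) := Finset.univ.map f with hS
  have hScard : S.card ≤ k := by
    have hne : S ≠ Finset.univ := by
      intro h
      have : j0 ∈ S := h ▸ Finset.mem_univ j0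
      obtain ⟨i, _, hi⟩ := Finset.mem_map.1 this
      exact hj0 i hi
    have := Finset.card_lt_card (Finset.ssubset_univ_iff.2 hne)
    rw [Finset.card_univ, Fintype.card_fin] at this
    omega
  obtain ⟨Tset, hST, hTcard⟩ := Finset.exists_superset_card_eq hScard
    (by rw [Fintype.card_fin]; omega)
  set g : Fin k → Fin D := fun i => (Tset.orderIsoOfFin hTcard i : Fin D) with hg
  have ginj : Function.Injective g := by
    intro i j h
    exact (Tset.orderIsoOfFin hTcard).injective (Subtype.coe_injective h)
  set M : Matrix (Fin k) (Fin D) ℤ := fun i j => bM (g i) j with hM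
  have hMt : ∀ a' : Fin k → ℤ, (fun j => ∑ i, a' i * M i j) = (∑ i, a' i • bM (g i)) := by
    intro a'
    funext j
    rw [Finset.sum_apply]
    apply Finset.sum_congr rfl; intro i _
    simp [hM, smul_eq_mul]
  refine ⟨M, ?_, ?_, ?_⟩
  · -- injectivity of transpose
    intro a' ha'
    rw [hMt] at ha'
    have hli : LinearIndependent ℤ (⇑bM ∘ g) := bM.linearIndependent.comp g ginj
    have := Fintype.linearIndependent_iff.1 hli a' (by simpa using ha')
    funext i; exact this i
  · -- row span contains the orthogonal lattice
    intro a ha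
    have haA : a ∈ A := by
      rw [hA, LinearMap.mem_ker, hL]
      simpa [pairW] using ha
    have hspan : a ∈ Submodule.span ℤ (Set.range fun i : Fin k => bM (g i)) := by
      have hrepr := bN.sum_repr ⟨a, haA⟩
      have hcoe : a = ∑ i, (bN.repr ⟨a, haA⟩ i) • ((bN i : Fin D → ℤ)) := by
        have := congrArg (Submodule.subtype A) hrepr
        simp only [map_sum, map_smul, Submodule.coe_subtype] at this
        exact this.symm
      rw [hcoe]
      apply Submodule.sum_mem
      intro i _
      apply Submodule.smul_mem
      rw [hsnf i]
      apply Submodule.smul_mem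
      have hfi : f i ∈ Tset := hST (by rw [hS]; exact Finset.mem_map_of_mem f (Finset.mem_univ i))
      obtain ⟨i', hi'⟩ := (Tset.orderIsoOfFin hTcard).surjective ⟨f i, hfi⟩
      apply Submodule.subset_span
      refine ⟨i', ?_⟩
      show bM (g i') = bM (f i)
      have hgi : g i' = f i := by
        rw [hg]
        simp only
        rw [hi']
      rw [hgi]
    obtain ⟨c', hc'⟩ := Submodule.mem_span_range_iff_exists_fun ℤ |>.1 hspan
    exact ⟨c', by rw [hMt]; exact hc'.symm⟩
  · -- surjectivity over ℝ
    intro y'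
    set Bz : Matrix (Fin D) (Fin D) ℤ := fun p q => bM p q with hBz
    have hinv : Invertible ((Pi.basisFun ℤ (Fin D)).toMatrix ⇑bM) :=
      Module.Basis.invertibleToMatrix (Pi.basisFun ℤ (Fin D)) bM
    have htm : (Pi.basisFun ℤ (Fin D)).toMatrix ⇑bM = Bz.transpose := by
      funext p q
      rw [Module.Basis.toMatrix_apply]
      simp [hBz, Matrix.transpose_apply]
      rfl
    have hdetz : IsUnit Bz.det := by
      have : IsUnit (Bz.transpose).det := by
        rw [← htm]
        exact (Matrix.isUnit_iff_isUnit_det _).1 (isUnit_of_invertible _)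
      rwa [Matrix.det_transpose] at this
    set Br : Matrix (Fin D) (Fin D) ℝ := Bz.map (Int.cast : ℤ → ℝ) with hBr
    have hdetr : IsUnit Br.det := by
      have h1 : Br.det = ((Bz.det : ℤ) : ℝ) := by
        rw [hBr]
        have := RingHom.map_det (Int.castRingHom ℝ) Bz
        rw [show Bz.map (Int.cast : ℤ → ℝ) = (Int.castRingHom ℝ).mapMatrix Bz from rfl, ← this]
        rfl
      rw [isUnit_iff_ne_zero, h1]
      rcases Int.isUnit_iff.1 hdetz with h | h <;> rw [h] <;> norm_num
    set yt : Fin D → ℝ := fun p => if h : ∃ i, g i = p then y' h.choose else 0 with hyt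
    refine ⟨Br⁻¹.mulVec yt, ?_⟩
    have hBx : Br.mulVec (Br⁻¹.mulVec yt) = yt := by
      rw [Matrix.mulVec_mulVec, Matrix.mul_nonsing_inv _ hdetr, Matrix.one_mulVec]
    funext i
    show (∑ j, (M i j : ℝ) * (Br⁻¹.mulVec yt) j) = y' i
    have h1 : ∑ j, (M i j : ℝ) * (Br⁻¹.mulVec yt) j = Br.mulVec (Br⁻¹.mulVec yt) (g i) := by
      rw [Matrix.mulVec, dotProduct]
      apply Finset.sum_congr rfl; intro j _
      simp [hM, hBr, hBz]
      exact Or.inl rfl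
    rw [h1, hBx, hyt]
    have hex : ∃ i', g i' = g i := ⟨i, rfl⟩
    simp only [hex, dif_pos]
    congr 1
    exact ginj hex.choose_spec

end Lattice

section Main

/-- Arithmetic for the case `a = Mᵀ a'`. -/
lemma arith1 {h s n θ lam ε pxs pm pz : ℝ} (hθ0 : 0 ≤ θ) (hθ1 : θ ≤ 1)
    (hlam0 : 0 ≤ lam) (hlam1 : lam ≤ 1)
    (t1 : h + s ≤ pxs) (t2 : h + n ≤ pm) (t3 : h ≤ pz)
    (hε : ε ≤ lam*(s-n+θ*n) - θ*n) :
    h + (n + ε) ≤ lam * pxs + (1-lam)*((1-θ)*pm + θ*pz) := by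
  have e1 : lam * (h + s) ≤ lam * pxs := mul_le_mul_of_nonneg_left t1 hlam0
  have e2 : (1-θ) * (h + n) ≤ (1-θ) * pm := mul_le_mul_of_nonneg_left t2 (by linarith)
  have e3 : θ * h ≤ θ * pz := mul_le_mul_of_nonneg_left t3 hθ0
  have e4 : (1-lam) * ((1-θ)*(h+n) + θ*h) ≤ (1-lam) * ((1-θ)*pm + θ*pz) :=
    mul_le_mul_of_nonneg_left (add_le_add e2 e3) (by linarith)
  nlinarith [e1, e4]

/-- Arithmetic for bounded functionals not in the row span. -/
lemma arith2 {h n θ lam ε c1 pxs pm pz : ℝ} (hn : 0 < n) (hc0 : 0 < c1) (hc1 : c1 ≤ 1)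
    (hθ0 : 0 ≤ θ) (hθB : θ ≤ c1/(8*(n+1))) (hlam0 : 0 ≤ lam) (hlamB : lam ≤ c1/(8*(n+1)))
    (t1 : h ≤ pxs) (t2 : h + n + c1/2 ≤ pm) (t3 : h ≤ pz) (hε : ε ≤ c1/4) :
    h + (n + ε) ≤ lam * pxs + (1-lam)*((1-θ)*pm + θ*pz) := by
  set B : ℝ := c1/(8*(n+1)) with hB
  have hBpos : 0 < B := by rw [hB]; positivity
  have hB8 : B * (8*(n+1)) = c1 := by rw [hB]; field_simp
  have hB18 : B ≤ 1/8 := by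
    rw [hB, div_le_div_iff₀ (by positivity) (by norm_num)]
    nlinarith
  have hθ1 : θ ≤ 1 := by linarith
  have hlam1 : lam ≤ 1 := by linarith
  have e1 : lam * h ≤ lam * pxs := mul_le_mul_of_nonneg_left t1 hlam0
  have e2 : (1-θ) * (h + n + c1/2) ≤ (1-θ) * pm := mul_le_mul_of_nonneg_left t2 (by linarith)
  have e3 : θ * h ≤ θ * pz := mul_le_mul_of_nonneg_left t3 hθ0
  have e4 : (1-lam) * ((1-θ)*(h+n+c1/2) + θ*h) ≤ (1-lam) * ((1-θ)*pm + θ*pz) :=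
    mul_le_mul_of_nonneg_left (add_le_add e2 e3) (by linarith)
  -- key : (1-lam)*(1-θ)*(n + c1/2) ≥ n + c1/4
  have key : (1-lam)*((1-θ)*(n + c1/2)) ≥ n + c1/4 := by
    nlinarith [mul_nonneg hlam0 hθ0, mul_nonneg (mul_nonneg hlam0 hθ0) hn.le,
      sq_nonneg (lam - θ), sq_nonneg (lam + θ), hB8, hBpos, hn, hc0, hc1,
      mul_le_mul_of_nonneg_right (add_le_add hlamB hθB) (le_of_lt hn),
      mul_le_mul_of_nonneg_right (add_le_add hlamB hθB) (le_of_lt hc0),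
      mul_nonneg (mul_nonneg hlam0 hθ0) hc0.le]
  nlinarith [e1, e4]

/-- Arithmetic for large functionals. -/
lemma arith3 {h n κ θ lam ε pxs pm pz : ℝ} (hθ0 : 0 ≤ θ) (hθ1 : θ ≤ 1)
    (hlam0 : 0 ≤ lam) (hlam1 : lam ≤ 1)
    (t1 : h ≤ pxs) (t2 : h + n ≤ pm) (t3 : h + n + κ ≤ pz)
    (hε : ε ≤ (1-lam)*(n+θ*κ) - n) :
    h + (n + ε) ≤ lam * pxs + (1-lam)*((1-θ)*pm + θ*pz) := by
  have e1 : lam * h ≤ lam * pxs := mul_le_mul_of_nonneg_left t1 hlam0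
  have e2 : (1-θ) * (h + n) ≤ (1-θ) * pm := mul_le_mul_of_nonneg_left t2 (by linarith)
  have e3 : θ * (h + n + κ) ≤ θ * pz := mul_le_mul_of_nonneg_left t3 hθ0
  have e4 : (1-lam) * ((1-θ)*(h+n) + θ*(h+n+κ)) ≤ (1-lam) * ((1-θ)*pm + θ*pz) :=
    mul_le_mul_of_nonneg_left (add_le_add e2 e3) (by linarith)
  nlinarith [e1, e4]

set_option maxHeartbeats 2000000 in
open Finset in
/-- If the fine core of a full-dimensional lattice polytope `P ⊆ ℝ^d` is not a single point,
then its fine codegree is attained in dimension `k = d - 1`. -/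
lemma codeg_mem_lower {d k : ℕ} (hk : d = k + 1) (hk1 : 1 ≤ k)
    (P : Set (Fin d → ℝ)) (hP : IsLatticePolytope P) (hFD : IsFullDim P)
    (hnotsing : ¬ ∃ p : Fin d → ℝ, fineCore P = {p}) :
    fineCodeg P ∈ fineSpec k := by
  classical
  obtain ⟨V, hVne, hVint, hPV⟩ := hP
  have hconv : Convex ℝ P := hPV ▸ convex_convexHull ℝ _
  have hcomp : IsCompact P := hPV ▸ V.finite_toSet.isCompact_convexHull ℝ
  have hne : P.Nonempty := by
    rw [hPV]
    exact (hVne.to_set).mono (subset_convexHull ℝ _)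
  have hd0 : 0 < d := by omega
  set n := fineNumber P with hndef
  have hn : 0 < n := fineNumber_pos hd0 hcomp hne hconv hFD
  have hbddP : BddAbove (adjSet P) := adjSet_bddAbove hd0 hcomp hne
  -- two distinct core points
  obtain ⟨x0, hx0⟩ := core_nonempty hd0 hcomp hne hconv hFD
  have hy0 : ∃ y0 ∈ fineCore P, y0 ≠ x0 := by
    by_contra h
    push_neg at h
    exact hnotsing ⟨x0, Set.eq_singleton_iff_unique_mem.2 ⟨hx0, h⟩⟩
  obtain ⟨y0, hy0c, hy0ne⟩ := hy0
  set w : Fin d → ℝ := y0 - x0 with hwdef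
  have hw : w ≠ 0 := sub_ne_zero.2 hy0ne
  obtain ⟨M, hMinj, hMspan, hMsurj⟩ := lattice_proj hk hw
  set Mt : (Fin k → ℤ) → (Fin d → ℤ) := fun a' j => ∑ i, a' i * M i j with hMtdef
  set π : (Fin d → ℝ) → (Fin k → ℝ) := fun x i => ∑ j, (M i j : ℝ) * x j with hπdef
  set Q : Set (Fin k → ℝ) := π '' P with hQdef
  have hMt0 : Mt 0 = 0 := by funext j; simp [hMtdef]
  have hMtne : ∀ a' : Fin k → ℤ, a' ≠ 0 → Mt a' ≠ 0 := by
    intro a' ha' h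
    exact ha' (hMinj a' h)
  have pair_proj : ∀ (a' : Fin k → ℤ) (x : Fin d → ℝ), pair a' (π x) = pair (Mt a') x := by
    intro a' x
    simp only [pair, hπdef, hMtdef]
    calc ∑ i, (a' i : ℝ) * ∑ j, (M i j : ℝ) * x j
        = ∑ i, ∑ j, (a' i : ℝ) * ((M i j : ℝ) * x j) := by
          apply Finset.sum_congr rfl; intro i _; rw [Finset.mul_sum]
      _ = ∑ j, ∑ i, (a' i : ℝ) * ((M i j : ℝ) * x j) := Finset.sum_comm
      _ = ∑ j, ((∑ i, a' i * M i j : ℤ) : ℝ) * x j := by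
          apply Finset.sum_congr rfl; intro j _
          push_cast
          rw [Finset.sum_mul]
          apply Finset.sum_congr rfl; intro i _; ring
  -- π as a linear map
  set πL : (Fin d → ℝ) →ₗ[ℝ] (Fin k → ℝ) :=
    { toFun := π
      map_add' := by
        intro u v; funext i
        simp only [hπdef, Pi.add_apply, mul_add]
        rw [Finset.sum_add_distrib]
      map_smul' := by
        intro c u; funext i
        simp only [hπdef, Pi.smul_apply, smul_eq_mul, RingHom.id_apply]
        rw [Finset.mul_sum]
        apply Finset.sum_congr rfl; intro j _; ring } with hπL
  have hQhull : Q = convexHull ℝ ((V.image π : Finset (Fin k → ℝ)) : Set (Fin k → ℝ)) := by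
    rw [hQdef, hPV, Finset.coe_image]
    exact πL.image_convexHull _
  have hQlat : IsLatticePolytope Q := by
    refine ⟨V.image π, hVne.image π, ?_, hQhull⟩
    intro u hu i
    obtain ⟨v, hv, rfl⟩ := Finset.mem_image.1 hu
    choose nv hnv using hVint v hv
    refine ⟨∑ j, M i j * nv j, ?_⟩
    simp only [hπdef]
    push_cast
    apply Finset.sum_congr rfl
    intro j _
    rw [hnv j]
  have hQfd : IsFullDim Q := by
    rw [IsFullDim, hQdef]
    have := AffineMap.span_eq_top_of_surjective (f := πL.toAffineMap) hMsurj hFD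
    exact this
  have hQconv : Convex ℝ Q := hQhull ▸ convex_convexHull ℝ _
  have hQcomp : IsCompact Q := hQhull ▸ (V.image π).finite_toSet.isCompact_convexHull ℝ
  have hQne : Q.Nonempty := hne.image π
  have hk0 : 0 < k := hk1
  have hbddQ : BddAbove (adjSet Q) := adjSet_bddAbove hk0 hQcomp hQne
  have hsuppQ : ∀ a' : Fin k → ℤ, suppFn Q a' = suppFn P (Mt a') := by
    intro a'
    rw [suppFn, suppFn, hQdef, Set.image_image]
    congr 1
    apply Set.image_congr
    intro x _
    exact pair_proj a' x
  -- adjSet P ⊆ adjSet Q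
  have hPQ : adjSet P ⊆ adjSet Q := by
    rintro s ⟨hs0, x, hx⟩
    refine ⟨hs0, π x, fun a' ha' => ?_⟩
    rw [hsuppQ, pair_proj]
    exact hx (Mt a') (hMtne a' ha')
  obtain ⟨z, ρ, hρ, hz⟩ := exists_deep hconv hFD
  have hPSne : (adjSet P).Nonempty := ⟨ρ, mem_adjSet_of_deep hcomp hρ hz⟩
  obtain ⟨zQ, ρQ, hρQ, hzQ⟩ := exists_deep hQconv hQfd
  have hQSne : (adjSet Q).Nonempty := ⟨ρQ, mem_adjSet_of_deep hQcomp hρQ hzQ⟩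
  -- the hard direction
  have hQP : ∀ s ∈ adjSet Q, s ≤ n := by
    rintro s ⟨hs0, ys, hys⟩
    by_contra hsn
    push_neg at hsn
    -- ys belongs to Q
    have hysQ : ys ∈ Q := by
      apply mem_of_forall_suppFn_lt hQconv hQcomp hQne
      intro a' ha'
      have := hys a' ha'
      linarith
    obtain ⟨xs, hxsP, hπxs⟩ := hysQ
    have hza : ∀ a : Fin d → ℤ, suppFn P a + ρ * anorm a ≤ pair a z :=
      deep_slack hcomp hz hρ.le
    -- midpoint of the two core points
    set m : Fin d → ℝ := (1/2 : ℝ) • x0 + (1/2 : ℝ) • y0 with hmdef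
    have hma : ∀ a : Fin d → ℤ, a ≠ 0 → suppFn P a + n + |pair a w| / 2 ≤ pair a m := by
      intro a ha
      have h1 : suppFn P a + fineNumber P ≤ pair a x0 := hx0 a ha
      have h2 : suppFn P a + fineNumber P ≤ pair a y0 := hy0c a ha
      rw [← hndef] at h1 h2
      have hw1 : pair a w = pair a y0 - pair a x0 := by rw [hwdef, pair_sub_right]
      have hm1 : pair a m = (1/2) * pair a x0 + (1/2) * pair a y0 := by
        rw [hmdef, pair_comb]
      rcases abs_cases (pair a w) with ⟨he, _⟩ | ⟨he, _⟩ <;> rw [he] <;> linarith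
    -- constants
    have hsn' : 0 < s - n := by linarith
    set κ : ℝ := (n^2 + n + 1) / (s - n) with hκdef
    have hκ : 0 < κ := by rw [hκdef]; positivity
    have hκs : κ * (s - n) = n^2 + n + 1 := by
      rw [hκdef]; field_simp
    set R0 : ℝ := (n + κ) / ρ with hR0def
    set NB : ℤ := ⌈R0⌉ with hNB
    set Fs : Finset (Fin d → ℤ) := Finset.Icc (fun _ => -NB) (fun _ => NB) with hFs
    set T1 : Finset ℝ := insert (1:ℝ)
      ((Fs.filter (fun a => pair a w ≠ 0)).image (fun a => |pair a w|)) with hT1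
    set c1 : ℝ := T1.min' (Finset.insert_nonempty _ _) with hc1def
    have hc1mem : c1 ∈ T1 := T1.min'_mem (Finset.insert_nonempty _ _)
    have hc1pos : 0 < c1 := by
      rw [hT1] at hc1mem
      rcases Finset.mem_insert.1 hc1mem with h | h
      · rw [h]; norm_num
      · obtain ⟨a, hafil, heq⟩ := Finset.mem_image.1 h
        rw [← heq]
        exact abs_pos.2 (Finset.mem_filter.1 hafil).2
    have hc1le1 : c1 ≤ 1 := Finset.min'_le _ _ (Finset.mem_insert_self _ _)
    have hc1low : ∀ a : Fin d → ℤ, anorm a ≤ R0 → pair a w ≠ 0 → c1 ≤ |pair a w| := by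
      intro a hA hpw
      apply Finset.min'_le
      rw [hT1]
      apply Finset.mem_insert_of_mem
      apply Finset.mem_image_of_mem
      rw [Finset.mem_filter]
      refine ⟨?_, hpw⟩
      rw [hFs, Finset.mem_Icc]
      have hbnd : ∀ i, -NB ≤ a i ∧ a i ≤ NB := by
        intro i
        have h1 : |(a i : ℝ)| ≤ R0 := le_trans (abs_coord_le_anorm a i) hA
        have h2 : R0 ≤ (NB : ℝ) := Int.le_ceil R0
        rw [abs_le] at h1
        constructor
        · exact_mod_cast le_trans (by linarith : -(NB:ℝ) ≤ (a i : ℝ)) le_rfl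
        · exact_mod_cast le_trans le_rfl (by linarith : (a i : ℝ) ≤ (NB:ℝ))
      exact ⟨fun i => (hbnd i).1, fun i => (hbnd i).2⟩
    -- the mixing parameters
    set θ : ℝ := c1 * n / (8*(n+1)^2*(κ+1)) with hθdef
    have hθpos : 0 < θ := by rw [hθdef]; positivity
    have hθB : θ ≤ c1 / (8*(n+1)) := by
      rw [hθdef, div_le_div_iff₀ (by positivity) (by positivity)]
      nlinarith [mul_le_mul_of_nonneg_left (show n ≤ (n+1)*(κ+1) by nlinarith)
        (show (0:ℝ) ≤ c1*(8*(n+1)) by positivity), hc1pos, hκ, hn]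
    have hθ1 : θ < 1 := by
      have : c1 / (8*(n+1)) < 1 := by
        rw [div_lt_one (by positivity)]
        nlinarith [hc1le1, hn]
      linarith
    have hdenL : 0 < s - n + θ*n := by nlinarith
    have hdenU : 0 < n + θ*κ := by nlinarith
    set Lo : ℝ := θ*n / (s - n + θ*n) with hLo
    set Up : ℝ := θ*κ / (n + θ*κ) with hUp
    have hLU : Lo < Up := by
      rw [hLo, hUp, div_lt_div_iff₀ hdenL hdenU]
      have hh : θ*(κ*(s-n)) = θ*(n^2+n+1) := by rw [hκs]
      nlinarith [hθpos, hn]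
    set lam : ℝ := (Lo + Up)/2 with hlam
    have hLo0 : 0 ≤ Lo := by rw [hLo]; positivity
    have hlamL : Lo < lam := by rw [hlam]; linarith
    have hlamU : lam < Up := by rw [hlam]; linarith
    have hlam0 : 0 < lam := by
      have : 0 < Up := by rw [hUp]; positivity
      linarith
    have hUp1 : Up < 1 := by
      rw [hUp, div_lt_one hdenU]; linarith
    have hlam1 : lam < 1 := by linarith
    have hθκ : θ * (8*(n+1)^2*(κ+1)) = c1 * n := by
      rw [hθdef]; field_simp
    have hUpB : Up ≤ c1 / (8*(n+1)) := by
      have h1 : Up ≤ θ*κ/n := by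
        rw [hUp]
        apply div_le_div_of_nonneg_left (by positivity) hn
        nlinarith
      have h2 : θ*κ/n ≤ c1 / (8*(n+1)) := by
        rw [div_le_div_iff₀ hn (by positivity)]
        nlinarith [hθκ, mul_le_mul_of_nonneg_left (show κ ≤ (n+1)*(κ+1) by nlinarith)
          (show (0:ℝ) ≤ θ*(8*(n+1)) by positivity)]
      linarith
    have hlamB : lam ≤ c1 / (8*(n+1)) := le_trans hlamU.le hUpB
    -- the witness point
    set wfin : Fin d → ℝ := lam • xs + (1-lam) • ((1-θ) • m + θ • z) with hwfin
    set ε : ℝ := min (lam*(s-n+θ*n) - θ*n) (min (c1/4) ((1-lam)*(n+θ*κ) - n)) with hεdef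
    have hε1 : 0 < lam*(s-n+θ*n) - θ*n := by
      have := (div_lt_iff₀ hdenL).1 hlamL
      linarith
    have hε3 : 0 < (1-lam)*(n+θ*κ) - n := by
      have := (lt_div_iff₀ hdenU).1 hlamU
      nlinarith
    have hε0 : 0 < ε := lt_min hε1 (lt_min (by positivity) hε3)
    -- the key estimate
    have hkey : ∀ a : Fin d → ℤ, a ≠ 0 → suppFn P a + (n+ε) ≤ pair a wfin := by
      intro a ha
      have hpairw : pair a wfin =
          lam * pair a xs + (1-lam)*((1-θ)*pair a m + θ*pair a z) := by
        rw [hwfin, pair_comb, pair_comb]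
      have hxa : suppFn P a ≤ pair a xs := suppFn_le_pair hcomp hxsP a
      have hza' := hza a
      have hma' := hma a ha
      have h1an : 1 ≤ anorm a := one_le_anorm ha
      have hρa0 : 0 ≤ ρ * anorm a := mul_nonneg hρ.le (anorm_nonneg a)
      by_cases hcase : ∃ a', a = Mt a'
      · obtain ⟨a', rfl⟩ := hcase
        have ha' : a' ≠ 0 := fun h0 => ha (by rw [h0, hMt0])
        have hs1 : suppFn P (Mt a') + s ≤ pair (Mt a') xs := by
          have hh := hys a' ha'
          rw [hsuppQ] at hh
          rw [← hπxs, pair_proj] at hh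
          exact hh
        have hε' : ε ≤ lam*(s-n+θ*n) - θ*n := min_le_left _ _
        rw [hpairw]
        exact arith1 hθpos.le hθ1.le hlam0.le hlam1.le hs1
          (by linarith [abs_nonneg (pair (Mt a') w)])
          (by linarith) hε'
      · have hpw : pair a w ≠ 0 := fun h0 => hcase (hMspan a h0)
        by_cases hbig : anorm a ≤ R0
        · -- bounded functionals: uniform margin c1
          have hc1a : c1 ≤ |pair a w| := hc1low a hbig hpw
          have hε' : ε ≤ c1/4 := le_trans (min_le_right _ _) (min_le_left _ _)
          rw [hpairw]
          exact arith2 hn hc1pos hc1le1 hθpos.le hθB hlam0.le hlamB hxa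
            (by linarith) (by linarith) hε'
        · -- large functionals: margin from the deep point
          push_neg at hbig
          have hρa : n + κ ≤ ρ * anorm a := by
            rw [hR0def, div_lt_iff₀ hρ] at hbig
            linarith [hbig]
          have hε' : ε ≤ (1-lam)*(n+θ*κ) - n := le_trans (min_le_right _ _) (min_le_right _ _)
          rw [hpairw]
          exact arith3 hθpos.le hθ1.le hlam0.le hlam1.le hxa
            (by linarith [abs_nonneg (pair a w)]) (by linarith) hε'
    -- contradiction with the supremum
    have hmem : (n + ε) ∈ adjSet P := ⟨by linarith, wfin, hkey⟩
    have hle : n + ε ≤ fineNumber P := le_csSup hbddP hmem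
    rw [← hndef] at hle
    linarith
  have hnQ : fineNumber Q = n := by
    apply le_antisymm
    · exact csSup_le hQSne hQP
    · calc n = sSup (adjSet P) := rfl
      _ ≤ sSup (adjSet Q) := csSup_le_csSup hbddQ hPSne hPQ
      _ = fineNumber Q := rfl
  refine ⟨Q, hQlat, hQfd, ?_⟩
  rw [fineCodeg, fineCodeg, hnQ]

end Main
end
end S5

/-- new spectrum values in dimension `d` come from polytopes whose
Fine core is a single point. -/
theorem stmt_5 (d : ℕ) (hd : 2 ≤ d) (r : ℝ) (hr : r ∈ fineSpec d \ fineSpec (d - 1)) :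
    ∃ P : Set (Fin d → ℝ), IsLatticePolytope P ∧ IsFullDim P ∧ r = fineCodeg P ∧
      ∃ p : Fin d → ℝ, fineCore P = {p} := by
  obtain ⟨⟨P, hP, hFD, hr'⟩, hnot⟩ := hr
  by_cases hsing : ∃ p : Fin d → ℝ, fineCore P = {p}
  · exact ⟨P, hP, hFD, hr', hsing⟩
  · exfalso
    apply hnot
    have hk : d = (d - 1) + 1 := by omega
    have := S5.codeg_mem_lower hk (by omega) P hP hFD hsing
    rw [hr']
    exact this
end

section
/- Let P ⊆ ℝ^d be a full-dimensional lattice polytope and let v_1, ..., v_k ∈ (ℤ^d)* be Fine core normals of P. Let λ_1, ..., λ_k ≥ 0 with λ_1 + ... + λ_k ≤ 1, and suppose v := λ_1 v_1 + ... + λ_k v_k lies in (ℤ^d)* and v ≠ 0. Then v is also a Fine core normal of P. -/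
open Set

lemma pair_continuous {d : ℕ} (a : Fin d → ℤ) : Continuous (pair a) := by
  unfold pair
  exact continuous_finset_sum _ fun i _ => continuous_const.mul (continuous_apply i)

lemma suppFn_le {d : ℕ} {P : Set (Fin d → ℝ)} (hP : IsLatticePolytope P)
    (a : Fin d → ℤ) {x : Fin d → ℝ} (hx : x ∈ P) : suppFn P a ≤ pair a x := by
  obtain ⟨V, hne, -, rfl⟩ := hP
  have hc : IsCompact (convexHull ℝ (V : Set (Fin d → ℝ))) :=
    V.finite_toSet.isCompact_convexHull ℝ
  exact csInf_le (hc.image (pair_continuous a)).bddBelow ⟨x, hx, rfl⟩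

/-- a subconvex integer combination of Fine core normals is again a
Fine core normal. -/
theorem stmt_7 {d : ℕ} (P : Set (Fin d → ℝ)) (hP : IsLatticePolytope P) (hfull : IsFullDim P)
    (k : ℕ) (v : Fin k → Fin d → ℤ) (hv : ∀ i, IsFineCoreNormal P (v i))
    (lam : Fin k → ℝ) (hlam : ∀ i, 0 ≤ lam i) (hsum : ∑ i, lam i ≤ 1)
    (w : Fin d → ℤ) (hw : ∀ j, (w j : ℝ) = ∑ i, lam i * (v i j : ℝ)) (hw0 : w ≠ 0) :
    IsFineCoreNormal P w := by
  have hPne : P.Nonempty := by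
    obtain ⟨V, ⟨x, hx⟩, -, rfl⟩ := hP
    exact ⟨x, subset_convexHull ℝ _ hx⟩
  have hn0 : 0 ≤ fineNumber P := Real.sSup_nonneg fun s hs => hs.1.le
  have key : ∀ z : Fin d → ℝ, ∑ j, (w j : ℝ) * z j = ∑ i, lam i * ∑ j, (v i j : ℝ) * z j := by
    intro z
    simp only [hw, Finset.sum_mul, Finset.mul_sum, mul_assoc]
    exact Finset.sum_comm
  refine ⟨hw0, fun y hy => ?_⟩
  have hge : suppFn P w + fineNumber P ≤ pair w y := hy w hw0
  have hpair : pair w y = ∑ i, lam i * pair (v i) y := key y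
  have hval : pair w y = ∑ i, lam i * (suppFn P (v i) + fineNumber P) := by
    rw [hpair]
    exact Finset.sum_congr rfl fun i _ => by rw [(hv i).2 y hy]
  have hsupp : ∑ i, lam i * suppFn P (v i) ≤ suppFn P w := by
    refine le_csInf (hPne.image _) ?_
    rintro b ⟨x, hx, rfl⟩
    have : ∑ i, lam i * suppFn P (v i) ≤ ∑ i, lam i * pair (v i) x :=
      Finset.sum_le_sum fun i _ =>
        mul_le_mul_of_nonneg_left (suppFn_le hP (v i) hx) (hlam i)
    refine this.trans_eq ?_
    exact (key x).symm
  have hsum' : (∑ i, lam i) * fineNumber P ≤ fineNumber P :=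
    mul_le_of_le_one_left hn0 hsum
  have hle : pair w y ≤ suppFn P w + fineNumber P := by
    rw [hval]
    have : ∑ i, lam i * (suppFn P (v i) + fineNumber P)
        = (∑ i, lam i * suppFn P (v i)) + (∑ i, lam i) * fineNumber P := by
      rw [Finset.sum_mul, ← Finset.sum_add_distrib]
      exact Finset.sum_congr rfl fun i _ => by ring
    rw [this]
    linarith
  linarith
end

section
/- Let P ⊆ ℝ^d be a full-dimensional lattice polytope, let Pyr(P) = conv((P × {1}) ∪ {0}) ⊆ ℝ^{d+1}, and let 0 < t < 1. If the Fine adjoint polytope (Pyr(P))^{F(t)} is nonempty, then P^{F(s)} is nonempty for s = t/(1-t). In fact, if (p, h) ∈ (Pyr(P))^{F(t)}, then p/h ∈ P^{F(t/(1-t))}. -/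
open Set

lemma pair_isLinear {d : ℕ} (a : Fin d → ℤ) : IsLinearMap ℝ (pair a) := by
  constructor
  · intro x y; simp [pair, mul_add, Finset.sum_add_distrib]
  · intro c x; simp [pair, Finset.mul_sum, mul_left_comm]

lemma hull_lower {d : ℕ} (a : Fin d → ℤ) (S : Set (Fin d → ℝ)) (c : ℝ)
    (h : ∀ s ∈ S, c ≤ pair a s) {x} (hx : x ∈ convexHull ℝ S) : c ≤ pair a x :=
  convexHull_min h (convex_halfSpace_ge (pair_isLinear a) c) hx

lemma suppfn_int {d : ℕ} (V : Finset (Fin d → ℝ)) (hVne : V.Nonempty)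
    (hVint : ∀ v ∈ V, ∀ i, ∃ z : ℤ, v i = (z : ℝ)) (a : Fin d → ℤ) :
    ∃ n : ℤ, suppFn (convexHull ℝ (V : Set (Fin d → ℝ))) a = (n : ℝ) ∧
      ∀ x ∈ convexHull ℝ (V : Set (Fin d → ℝ)), (n : ℝ) ≤ pair a x := by
  obtain ⟨v, hv, hmin⟩ := V.exists_min_image (pair a) hVne
  choose z hz using hVint v hv
  have hpv : pair a v = ((∑ i, a i * z i : ℤ) : ℝ) := by
    simp only [pair, hz]; push_cast; rfl
  have hlow : ∀ x ∈ convexHull ℝ (V : Set (Fin d → ℝ)), pair a v ≤ pair a x := by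
    intro x hx
    exact hull_lower a _ _ (fun s hs => hmin s hs) hx
  have hvmem : v ∈ convexHull ℝ (V : Set (Fin d → ℝ)) :=
    subset_convexHull ℝ _ hv
  refine ⟨∑ i, a i * z i, ?_, fun x hx => hpv ▸ hlow x hx⟩
  rw [← hpv]
  apply le_antisymm
  · exact csInf_le ⟨pair a v, by rintro _ ⟨x, hx, rfl⟩; exact hlow x hx⟩ ⟨v, hvmem, rfl⟩
  · exact le_csInf ⟨pair a v, v, hvmem, rfl⟩ (by rintro _ ⟨x, hx, rfl⟩; exact hlow x hx)

lemma pair_snoc_apply {d : ℕ} (a : Fin d → ℤ) (b : ℤ) (q : Fin (d + 1) → ℝ) :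
    pair (Fin.snoc a b) q
      = pair a (fun i => q (Fin.castSucc i)) + (b : ℝ) * q (Fin.last d) := by
  simp [pair, Fin.sum_univ_castSucc]

lemma pyr_suppFn_lb {d : ℕ} (P : Set (Fin d → ℝ)) (c : Fin (d + 1) → ℤ) (r : ℝ)
    (hr : ∀ g ∈ ((fun x => Fin.snoc x (1 : ℝ)) '' P) ∪ {0}, r ≤ pair c g) :
    r ≤ suppFn (pyrSet P) c := by
  apply le_csInf
  · exact ⟨pair c 0, 0, subset_convexHull ℝ _ (Or.inr rfl), rfl⟩
  · rintro _ ⟨x, hx, rfl⟩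
    exact hull_lower c _ r hr hx

/-- a nonempty Fine adjoint of the pyramid yields a nonempty Fine
adjoint of the base at parameter `t / (1 - t)`, via the map `(p, h) ↦ p / h`. -/
theorem stmt_10 {d : ℕ} (hd : 1 ≤ d) (P : Set (Fin d → ℝ)) (hP : IsLatticePolytope P)
    (hfull : IsFullDim P) (t : ℝ) (ht0 : 0 < t) (ht1 : t < 1) :
    ((fineAdjoint (pyrSet P) t).Nonempty → (fineAdjoint P (t / (1 - t))).Nonempty) ∧
    (∀ q ∈ fineAdjoint (pyrSet P) t,
      (fun i => q (Fin.castSucc i) / q (Fin.last d)) ∈ fineAdjoint P (t / (1 - t))) := by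
  obtain ⟨V, hVne, hVint, hPV⟩ := hP
  have h1t : (0 : ℝ) < 1 - t := by linarith
  have hmem : ∀ q ∈ fineAdjoint (pyrSet P) t,
      (fun i => q (Fin.castSucc i) / q (Fin.last d)) ∈ fineAdjoint P (t / (1 - t)) := by
    intro q hq
    set h := q (Fin.last d) with hh
    set p := fun i => q (Fin.castSucc i) with hp
    -- h ≥ t
    have hht : t ≤ h := by
      have hne : (Fin.snoc (0 : Fin d → ℤ) 1 : Fin (d + 1) → ℤ) ≠ 0 := by
        intro h0
        have := congrFun h0 (Fin.last d)
        simp at this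
      have hq1 := hq _ hne
      have hsupp : (0 : ℝ) ≤ suppFn (pyrSet P) (Fin.snoc (0 : Fin d → ℤ) 1) := by
        apply pyr_suppFn_lb
        rintro g (⟨x, hx, rfl⟩ | rfl)
        · rw [pair_snoc_apply]
          simp [pair]
        · simp [pair]
      have hpairq : pair (Fin.snoc (0 : Fin d → ℤ) 1) q = h := by
        rw [pair_snoc_apply]; simp [pair]; rfl
      rw [hpairq] at hq1
      linarith
    have hhpos : 0 < h := lt_of_lt_of_le ht0 hht
    -- h ≤ 1 - t
    have hh1t : h ≤ 1 - t := by
      have hne : (Fin.snoc (0 : Fin d → ℤ) (-1) : Fin (d + 1) → ℤ) ≠ 0 := by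
        intro h0
        have := congrFun h0 (Fin.last d)
        simp at this
      have hq1 := hq _ hne
      have hsupp : (-1 : ℝ) ≤ suppFn (pyrSet P) (Fin.snoc (0 : Fin d → ℤ) (-1)) := by
        apply pyr_suppFn_lb
        rintro g (⟨x, hx, rfl⟩ | rfl)
        · rw [pair_snoc_apply]
          simp [pair]
        · simp [pair]
      have hpairq : pair (Fin.snoc (0 : Fin d → ℤ) (-1)) q = -h := by
        rw [pair_snoc_apply]; simp [pair]; rfl
      rw [hpairq] at hq1
      linarith
    -- main
    intro a ha
    obtain ⟨n, hn, hnlb⟩ := suppfn_int V hVne hVint a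
    rw [← hPV] at hn hnlb
    have hne : (Fin.snoc a (-n) : Fin (d + 1) → ℤ) ≠ 0 := by
      intro h0
      apply ha
      funext i
      have := congrFun h0 (Fin.castSucc i)
      simpa using this
    have hq1 := hq _ hne
    have hsupp : (0 : ℝ) ≤ suppFn (pyrSet P) (Fin.snoc a (-n)) := by
      apply pyr_suppFn_lb
      rintro g (⟨x, hx, rfl⟩ | rfl)
      · rw [pair_snoc_apply]
        have hxe : (fun i : Fin d => (Fin.snoc x (1 : ℝ) : Fin (d+1) → ℝ) (Fin.castSucc i)) = x := by
          funext i; simp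
        rw [hxe]
        have := hnlb x hx
        push_cast
        simp only [Fin.snoc_last]
        linarith
      · simp [pair]
    have hpairq : pair (Fin.snoc a (-n)) q = pair a p - (n : ℝ) * h := by
      rw [pair_snoc_apply]; push_cast; ring
    rw [hpairq] at hq1
    -- pair a p ≥ n * h + t
    have hkey : (n : ℝ) * h + t ≤ pair a p := by linarith
    have hpdiv : pair a (fun i => p i / h) = pair a p / h := by
      simp [pair, Finset.sum_div, mul_div_assoc]
    show suppFn P a + t / (1 - t) ≤ pair a fun i => q (Fin.castSucc i) / q (Fin.last d)
    have : (fun i => q (Fin.castSucc i) / q (Fin.last d)) = fun i => p i / h := rfl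
    rw [this, hpdiv, hn, le_div_iff₀ hhpos]
    have hs : t / (1 - t) * (1 - t) = t := div_mul_cancel₀ t (ne_of_gt h1t)
    have hs0 : 0 ≤ t / (1 - t) := le_of_lt (div_pos ht0 h1t)
    nlinarith [mul_le_mul_of_nonneg_left hh1t hs0]
  exact ⟨fun ⟨q, hq⟩ => ⟨_, hmem q hq⟩, hmem⟩
end
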